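/- Let G = (N, E) be a 2-connected finite simple graph (connected, at least three vertices, and no cut vertex) and let e = (i,j) and ê = (w,z) be two distinct edges of G. Then T({i,w}, {j,z}) ∪ T({i,z}, {j,w}) ≠ ∅, i.e., there exists a spanning forest of G consisting of exactly two vertex-disjoint trees such that one tree contains i and one endpoint of ê and the other tree contains j and the other endpoint of ê. -/

import Mathlib

open Finset

variable {V : Type*} [Fintype V] [DecidableEq V]

/-- `F` is the edge set of a spanning forest of `G` consisting of exactly two
vertex-disjoint trees that together cover all vertices of `G`, one tree containing
every vertex of `N₁` and the other containing every vertex of `N₂`. -/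
def IsTwoTreeForest (G : SimpleGraph V) (N₁ N₂ : Set V) (F : Finset (Sym2 V)) : Prop :=
  ↑F ⊆ G.edgeSet ∧
    (SimpleGraph.fromEdgeSet (↑F : Set (Sym2 V))).IsAcyclic ∧
    ∃ u v : V,
      ¬(SimpleGraph.fromEdgeSet (↑F : Set (Sym2 V))).Reachable u v ∧
      (∀ x : V, (SimpleGraph.fromEdgeSet (↑F : Set (Sym2 V))).Reachable x u ∨
        (SimpleGraph.fromEdgeSet (↑F : Set (Sym2 V))).Reachable x v) ∧
      (∀ x ∈ N₁, (SimpleGraph.fromEdgeSet (↑F : Set (Sym2 V))).Reachable x u) ∧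
      (∀ x ∈ N₂, (SimpleGraph.fromEdgeSet (↑F : Set (Sym2 V))).Reachable x v)

/-- The set `T(N₁, N₂)` of spanning forests of `G` consisting of exactly two trees,
one containing `N₁` and the other containing `N₂`, identified with their edge sets. -/
noncomputable def twoForests (G : SimpleGraph V) (N₁ N₂ : Set V) :
    Finset (Finset (Sym2 V)) :=
  letI := Classical.decPred (IsTwoTreeForest G N₁ N₂)
  Finset.univ.filter (IsTwoTreeForest G N₁ N₂)

/-- `G` is 2-connected: it is connected, has at least three vertices, and remains
connected after the deletion of any single vertex. -/
def TwoConnected (G : SimpleGraph V) : Prop :=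
  G.Connected ∧ 3 ≤ Fintype.card V ∧
    ∀ u : V, (G.induce ({u}ᶜ : Set V)).Connected

section Aux

open SimpleGraph Walk

set_option linter.unusedSectionVars false
set_option linter.unusedVariables false

variable {G : SimpleGraph V}

lemma walkAvoid (h2 : ∀ u : V, (G.induce ({u}ᶜ : Set V)).Connected)
    {u a b : V} (ha : a ≠ u) (hb : b ≠ u) :
    ∃ p : G.Walk a b, ∀ v ∈ p.support, v ≠ u := by
  obtain ⟨W⟩ := ((h2 u) ⟨a, by simp [ha]⟩ ⟨b, by simp [hb]⟩)
  refine ⟨W.map ⟨Subtype.val, fun h => h⟩, ?_⟩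
  intro v hv
  rw [Walk.support_map] at hv
  simp only [List.mem_map] at hv
  obtain ⟨⟨x, hx⟩, _, rfl⟩ := hv
  exact hx

lemma firstMeet {a b : V} (p : G.Walk a b) (S : Set V) (hb : b ∈ S) :
    ∃ (x : V) (q : G.Walk a x), x ∈ S ∧ (∀ v ∈ q.support, v ∈ p.support) ∧
      (∀ v ∈ q.support, v ∈ S → v = x) := by
  induction p with
  | nil => exact ⟨_, .nil, hb, by simp, by simp⟩
  | @cons u c d h p ih =>
    by_cases hu : u ∈ S
    · exact ⟨u, .nil, hu, by simp, by simp⟩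
    · obtain ⟨x, q, hx, hsub, hmeet⟩ := ih hb
      refine ⟨x, .cons h q, hx, ?_, ?_⟩
      · intro v hv
        rw [Walk.support_cons, List.mem_cons] at hv ⊢
        rcases hv with rfl | hv
        · exact Or.inl rfl
        · exact Or.inr (hsub v hv)
      · intro v hv hvS
        rw [Walk.support_cons, List.mem_cons] at hv
        rcases hv with rfl | hv
        · exact absurd hvS hu
        · exact hmeet v hv hvS

/-- For a path, the prefix and suffix at a split point share only the split point. -/
lemma junction {a b c : V} {p : G.Walk a b} (hp : p.IsPath) (hc : c ∈ p.support)
    {x : V} (hx1 : x ∈ (p.takeUntil c hc).support) (hx2 : x ∈ (p.dropUntil c hc).support) :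
    x = c := by
  have hs := p.take_spec hc
  have hnd : p.support.Nodup := hp.support_nodup
  rw [← hs, Walk.support_append] at hnd
  have hdisj := List.disjoint_of_nodup_append hnd
  have h2' : x ∈ c :: (p.dropUntil c hc).support.tail := by
    rw [← Walk.support_eq_cons]; exact hx2
  rcases List.mem_cons.mp h2' with rfl | h
  · rfl
  · exact (hdisj hx1 h).elim

/-- start not in dropUntil for a path when split point differs from start -/
lemma start_not_mem_dropUntil {a b c : V} {p : G.Walk a b} (hp : p.IsPath)
    (hc : c ∈ p.support) (hca : c ≠ a) : a ∉ (p.dropUntil c hc).support := by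
  intro ha
  exact hca (junction hp hc (Walk.start_mem_support _) ha).symm

/-- endpoint not in takeUntil for a path when split point differs from it -/
lemma end_not_mem_takeUntil {a b c : V} {p : G.Walk a b} (hp : p.IsPath)
    (hc : c ∈ p.support) (hcb : c ≠ b) : b ∉ (p.takeUntil c hc).support := by
  intro hb
  exact hcb (junction hp hc hb (Walk.end_mem_support _)).symm

def IntDisj (G : SimpleGraph V) (u v : V) : Prop :=
  ∃ (P Q : G.Walk u v), P.IsPath ∧ Q.IsPath ∧
    ∀ x ∈ P.support, x ∈ Q.support → x = u ∨ x = v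

lemma helperA {u w v : V} {A1 A2 : G.Walk u w} (h1 : A1.IsPath) (_h2 : A2.IsPath)
    (hsh : ∀ x ∈ A1.support, x ∈ A2.support → x = u ∨ x = w)
    (hwv : G.Adj w v) (_hvu : v ≠ u) (hvw : v ≠ w) (hv1 : v ∈ A1.support) :
    IntDisj G u v := by
  refine ⟨A1.takeUntil v hv1, (A2.append (Walk.cons hwv .nil)).bypass,
    h1.takeUntil hv1, Walk.bypass_isPath _, ?_⟩
  intro x hxP hxQ
  have hxQ' := Walk.support_bypass_subset _ hxQ
  rw [Walk.mem_support_append_iff] at hxQ'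
  have hwP : w ∉ (A1.takeUntil v hv1).support := end_not_mem_takeUntil h1 hv1 hvw
  rcases hxQ' with hA2 | hcons
  · rcases hsh x (Walk.support_takeUntil_subset _ _ hxP) hA2 with h | rfl
    · exact Or.inl h
    · exact (hwP hxP).elim
  · simp only [Walk.support_cons, Walk.support_nil, List.mem_cons, List.mem_singleton] at hcons
    rcases hcons with rfl | hcons
    · exact (hwP hxP).elim
    · rcases hcons with rfl | h
      · exact Or.inr rfl
      · exact absurd h List.not_mem_nil

lemma helperB1 {u w v x : V} {A1 A2 : G.Walk u w} (h1 : A1.IsPath) (_h2 : A2.IsPath)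
    (hsh : ∀ y ∈ A1.support, y ∈ A2.support → y = u ∨ y = w)
    (hwv : G.Adj w v) (_hvu : v ≠ u) (hv1 : v ∉ A1.support) (_hv2 : v ∉ A2.support)
    {Rq : G.Walk v x} (hRw : ∀ y ∈ Rq.support, y ≠ w)
    (hmeet : ∀ y ∈ Rq.support, (y ∈ A1.support ∨ y ∈ A2.support) → y = x)
    (hxu : x ≠ u) (hx1 : x ∈ A1.support) : IntDisj G u v := by
  have hxw : x ≠ w := hRw x (Walk.end_mem_support _)
  refine ⟨((A1.takeUntil x hx1).append Rq.reverse).bypass,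
    (A2.append (Walk.cons hwv .nil)).bypass, Walk.bypass_isPath _, Walk.bypass_isPath _, ?_⟩
  intro y hyP hyQ
  have hyP' := Walk.support_bypass_subset _ hyP
  have hyQ' := Walk.support_bypass_subset _ hyQ
  rw [Walk.mem_support_append_iff] at hyP' hyQ'
  rw [Walk.support_reverse, List.mem_reverse] at hyP'
  have hwT : w ∉ (A1.takeUntil x hx1).support := end_not_mem_takeUntil h1 hx1 hxw
  rcases hyQ' with hA2 | hcons
  · rcases hyP' with hT | hR
    · rcases hsh y (Walk.support_takeUntil_subset _ _ hT) hA2 with h | rfl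
      · exact Or.inl h
      · exact (hwT hT).elim
    · have := hmeet y hR (Or.inr hA2)
      subst this
      rcases hsh y hx1 hA2 with h | h
      · exact absurd h hxu
      · exact absurd h hxw
  · simp only [Walk.support_cons, Walk.support_nil, List.mem_cons, List.mem_singleton] at hcons
    rcases hcons with rfl | hcons
    · rcases hyP' with hT | hR
      · exact (hwT hT).elim
      · exact absurd rfl (hRw _ hR)
    · rcases hcons with rfl | h
      · exact Or.inr rfl
      · exact absurd h List.not_mem_nil

lemma intDisj_of_adj {u v : V} (h : G.Adj u v) : IntDisj G u v := by
  have hp : (Walk.cons h .nil : G.Walk u v).IsPath := by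
    simp [Walk.cons_isPath_iff, h.ne]
  refine ⟨Walk.cons h .nil, Walk.cons h .nil, hp, hp, ?_⟩
  intro x hx _
  simpa using hx

lemma intDisj (hc : G.Connected) (hind : ∀ u : V, (G.induce ({u}ᶜ : Set V)).Connected) :
    ∀ n : ℕ, ∀ u v : V, u ≠ v → G.dist u v ≤ n → IntDisj G u v := by
  intro n
  induction n with
  | zero =>
    intro u v huv hd
    obtain ⟨W, hW⟩ := hc.exists_walk_length_eq_dist u v
    exact absurd (Walk.eq_of_length_eq_zero (p := W) (by omega)) huv
  | succ n ih =>
    intro u v huv hd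
    by_cases hadj : G.Adj u v
    · exact intDisj_of_adj hadj
    obtain ⟨W, hW⟩ := hc.exists_walk_length_eq_dist u v
    obtain ⟨w, hvw, W₂, hWr⟩ := Walk.exists_eq_cons_of_ne (Ne.symm huv) W.reverse
    have hwu : w ≠ u := by
      rintro rfl
      exact hadj hvw.symm
    have hW₂ : W₂.length = G.dist u v - 1 := by
      have := congrArg Walk.length hWr
      rw [Walk.length_reverse, Walk.length_cons] at this
      omega
    have hdw : G.dist u w ≤ n := by
      have h1 : G.dist u w ≤ W₂.reverse.length := SimpleGraph.dist_le _
      rw [Walk.length_reverse] at h1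
      have hpos : 1 ≤ G.dist u v := by
        rcases Nat.eq_zero_or_pos (G.dist u v) with h0 | h1'
        · exact absurd (Walk.eq_of_length_eq_zero (p := W) (by omega)) huv
        · exact h1'
      omega
    obtain ⟨A1, A2, h1, h2, hsh⟩ := ih u w hwu.symm hdw
    have hwv : G.Adj w v := hvw.symm
    have hvw' : v ≠ w := hvw.ne
    by_cases hv1 : v ∈ A1.support
    · exact helperA h1 h2 hsh hwv huv.symm hvw' hv1
    by_cases hv2 : v ∈ A2.support
    · exact helperA h2 h1 (fun x hx hx' => hsh x hx' hx) hwv huv.symm hvw' hv2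
    obtain ⟨R, hR⟩ := walkAvoid hind (u := w) hvw' (Ne.symm hwu)
    obtain ⟨x, Rq, hx, hsubR, hmeet⟩ :=
      firstMeet R {y | y ∈ A1.support ∨ y ∈ A2.support} (Or.inl (Walk.start_mem_support _))
    have hRw : ∀ y ∈ Rq.support, y ≠ w := fun y hy => hR y (hsubR y hy)
    by_cases hxu : x = u
    · subst hxu
      refine ⟨Rq.reverse.bypass, (A1.append (Walk.cons hwv .nil)).bypass,
        Walk.bypass_isPath _, Walk.bypass_isPath _, ?_⟩
      intro y hyP hyQ
      have hyP' := Walk.support_bypass_subset _ hyP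
      have hyQ' := Walk.support_bypass_subset _ hyQ
      rw [Walk.support_reverse, List.mem_reverse] at hyP'
      rw [Walk.mem_support_append_iff] at hyQ'
      rcases hyQ' with hA1 | hcons
      · exact Or.inl (hmeet y hyP' (Or.inl hA1))
      · simp only [Walk.support_cons, Walk.support_nil, List.mem_cons,
          List.mem_singleton] at hcons
        rcases hcons with rfl | hcons
        · exact absurd rfl (hRw _ hyP')
        · rcases hcons with rfl | h
          · exact Or.inr rfl
          · exact absurd h List.not_mem_nil
    · rcases hx with hx1 | hx2
      · exact helperB1 h1 h2 hsh hwv huv.symm hv1 hv2 hRw hmeet hxu hx1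
      · exact helperB1 h2 h1 (fun y hy hy' => hsh y hy' hy) hwv huv.symm hv2 hv1 hRw
          (fun y hy hor => hmeet y hy hor.symm) hxu hx2

/-- Fan case: z on one of the arcs. -/
lemma fanA {u w z : V} {A1 A2 : G.Walk u w} (h1 : A1.IsPath) (_h2 : A2.IsPath)
    (hsh : ∀ x ∈ A1.support, x ∈ A2.support → x = u ∨ x = w)
    (hzw : z ≠ w) (hz1 : z ∈ A1.support) :
    ∃ (Pw : G.Walk u w) (Pz : G.Walk u z), Pw.IsPath ∧ Pz.IsPath ∧
      ∀ x ∈ Pw.support, x ∈ Pz.support → x = u := by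
  refine ⟨A2, A1.takeUntil z hz1, _h2, h1.takeUntil hz1, ?_⟩
  intro x hx2 hxT
  rcases hsh x (Walk.support_takeUntil_subset _ _ hxT) hx2 with h | rfl
  · exact h
  · exact absurd hxT (end_not_mem_takeUntil h1 hz1 hzw)

/-- Fan case: z off the cycle, attachment point on arc A1. -/
lemma fanB1 {u w z x : V} {A1 A2 : G.Walk u w} (h1 : A1.IsPath) (_h2 : A2.IsPath)
    (hsh : ∀ y ∈ A1.support, y ∈ A2.support → y = u ∨ y = w)
    {Rq : G.Walk z x} (hRw : ∀ y ∈ Rq.support, y ≠ w)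
    (hmeet : ∀ y ∈ Rq.support, (y ∈ A1.support ∨ y ∈ A2.support) → y = x)
    (hxu : x ≠ u) (hx1 : x ∈ A1.support) :
    ∃ (Pw : G.Walk u w) (Pz : G.Walk u z), Pw.IsPath ∧ Pz.IsPath ∧
      ∀ y ∈ Pw.support, y ∈ Pz.support → y = u := by
  have hxw : x ≠ w := hRw x (Walk.end_mem_support _)
  refine ⟨A2, ((A1.takeUntil x hx1).append Rq.reverse).bypass, _h2,
    Walk.bypass_isPath _, ?_⟩
  intro y hy2 hyP
  have hyP' := Walk.support_bypass_subset _ hyP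
  rw [Walk.mem_support_append_iff] at hyP'
  rw [Walk.support_reverse, List.mem_reverse] at hyP'
  rcases hyP' with hT | hR
  · rcases hsh y (Walk.support_takeUntil_subset _ _ hT) hy2 with h | rfl
    · exact h
    · exact absurd hT (end_not_mem_takeUntil h1 hx1 hxw)
  · have := hmeet y hR (Or.inr hy2)
    subst this
    rcases hsh y hx1 hy2 with h | h
    · exact absurd h hxu
    · exact absurd h hxw

/-- The fan lemma: two paths from `u` to `w` and `z` sharing only `u`. -/
lemma fan (hc : G.Connected) (hind : ∀ u : V, (G.induce ({u}ᶜ : Set V)).Connected)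
    {u w z : V} (huw : u ≠ w) (huz : u ≠ z) (hwz : w ≠ z) :
    ∃ (Pw : G.Walk u w) (Pz : G.Walk u z), Pw.IsPath ∧ Pz.IsPath ∧
      ∀ x ∈ Pw.support, x ∈ Pz.support → x = u := by
  obtain ⟨A1, A2, h1, h2, hsh⟩ := intDisj hc hind (G.dist u w) u w huw le_rfl
  have hzw : z ≠ w := fun h => hwz h.symm
  by_cases hz1 : z ∈ A1.support
  · exact fanA h1 h2 hsh hzw hz1
  by_cases hz2 : z ∈ A2.support
  · exact fanA h2 h1 (fun x hx hx' => hsh x hx' hx) hzw hz2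
  obtain ⟨R, hR⟩ := walkAvoid hind (u := w) hzw huw
  obtain ⟨x, Rq, hx, hsubR, hmeet⟩ :=
    firstMeet R {y | y ∈ A1.support ∨ y ∈ A2.support} (Or.inl (Walk.start_mem_support _))
  have hRw : ∀ y ∈ Rq.support, y ≠ w := fun y hy => hR y (hsubR y hy)
  by_cases hxu : x = u
  · subst hxu
    refine ⟨A1, Rq.reverse.bypass, h1, Walk.bypass_isPath _, ?_⟩
    intro y hy1 hyP
    have hyP' := Walk.support_bypass_subset _ hyP
    rw [Walk.support_reverse, List.mem_reverse] at hyP'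
    exact hmeet y hyP' (Or.inl hy1)
  · rcases hx with hx1 | hx2
    · exact fanB1 h1 h2 hsh hRw hmeet hxu hx1
    · exact fanB1 h2 h1 (fun y hy hy' => hsh y hy' hy) hRw
        (fun y hy hor => hmeet y hy hor.symm) hxu hx2

/-- Two fully disjoint walks linking {i,j} to {w,z} (all four distinct). -/
lemma twoLinks (hc : G.Connected) (hind : ∀ u : V, (G.induce ({u}ᶜ : Set V)).Connected)
    {i j w z : V} (hij : i ≠ j) (hiw : i ≠ w) (hiz : i ≠ z) (hjw : j ≠ w) (hjz : j ≠ z)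
    (hwz : w ≠ z) :
    (∃ (P : G.Walk i w) (Q : G.Walk j z), ∀ x ∈ P.support, x ∉ Q.support) ∨
    (∃ (P : G.Walk i z) (Q : G.Walk j w), ∀ x ∈ P.support, x ∉ Q.support) := by
  obtain ⟨Pw, Pz, hPw, hPz, hsh⟩ := fan hc hind hiw hiz hwz
  by_cases hjw' : j ∈ Pw.support
  · refine Or.inr ⟨Pz, Pw.dropUntil j hjw', ?_⟩
    intro x hx hx'
    have hxw : x ∈ Pw.support := Walk.support_dropUntil_subset _ _ hx'
    have := hsh x hxw hx
    subst this
    exact start_not_mem_dropUntil hPw hjw' hij.symm hx'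
  by_cases hjz' : j ∈ Pz.support
  · refine Or.inl ⟨Pw, Pz.dropUntil j hjz', ?_⟩
    intro x hx hx'
    have hxz : x ∈ Pz.support := Walk.support_dropUntil_subset _ _ hx'
    have := hsh x hx hxz
    subst this
    exact start_not_mem_dropUntil hPz hjz' hij.symm hx'
  obtain ⟨R, hR⟩ := walkAvoid hind (u := i) hij.symm hiw.symm
  obtain ⟨x, Rq, hx, hsubR, hmeet⟩ :=
    firstMeet R {y | y ∈ Pw.support ∨ y ∈ Pz.support} (Or.inl (Walk.end_mem_support _))
  have hRi : ∀ y ∈ Rq.support, y ≠ i := fun y hy => hR y (hsubR y hy)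
  have hxi : x ≠ i := hRi x (Walk.end_mem_support _)
  rcases hx with hxw | hxz
  · refine Or.inr ⟨Pz, Rq.append (Pw.dropUntil x hxw), ?_⟩
    intro y hy hy'
    rw [Walk.mem_support_append_iff] at hy'
    rcases hy' with hyR | hyD
    · have := hmeet y hyR (Or.inr hy)
      subst this
      exact hxi (hsh y hxw hy)
    · have hyw : y ∈ Pw.support := Walk.support_dropUntil_subset _ _ hyD
      have := hsh y hyw hy
      subst this
      exact start_not_mem_dropUntil hPw hxw hxi hyD
  · refine Or.inl ⟨Pw, Rq.append (Pz.dropUntil x hxz), ?_⟩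
    intro y hy hy'
    rw [Walk.mem_support_append_iff] at hy'
    rcases hy' with hyR | hyD
    · have := hmeet y hyR (Or.inl hy)
      subst this
      exact hxi (hsh y hy hxz)
    · have hyz : y ∈ Pz.support := Walk.support_dropUntil_subset _ _ hyD
      have := hsh y hy hyz
      subst this
      exact start_not_mem_dropUntil hPz hxz hxi hyD

def ConnOn (G : SimpleGraph V) (s : Set V) : Prop :=
  ∀ x ∈ s, ∀ y ∈ s, ∃ p : G.Walk x y, ∀ v ∈ p.support, v ∈ s

lemma connOn_singleton (u : V) : ConnOn G {u} := by
  rintro x rfl y hy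
  rcases hy with rfl
  exact ⟨.nil, by simp⟩

lemma connOn_compl_singleton (hind : ∀ u : V, (G.induce ({u}ᶜ : Set V)).Connected) (u : V) :
    ConnOn G ({u}ᶜ : Set V) := by
  intro x hx y hy
  obtain ⟨W⟩ := ((hind u) ⟨x, hx⟩ ⟨y, hy⟩)
  refine ⟨W.map ⟨Subtype.val, fun h => h⟩, ?_⟩
  intro v hv
  rw [Walk.support_map] at hv
  simp only [List.mem_map] at hv
  obtain ⟨⟨a, ha⟩, _, rfl⟩ := hv
  exact ha

lemma connOn_support {a b : V} (p : G.Walk a b) : ConnOn G {v | v ∈ p.support} := by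
  intro x hx y hy
  refine ⟨((p.takeUntil x hx).reverse.append (p.takeUntil y hy)), ?_⟩
  intro v hv
  rw [Walk.mem_support_append_iff] at hv
  rcases hv with hv | hv
  · rw [Walk.support_reverse, List.mem_reverse] at hv
    exact Walk.support_takeUntil_subset _ _ hv
  · exact Walk.support_takeUntil_subset _ _ hv

lemma connOn_insert {A : Set V} (hA : ConnOn G A) {x y : V} (hy : y ∈ A) (hxy : G.Adj x y) :
    ConnOn G (insert x A) := by
  have toMem : ∀ b ∈ A, ∃ p : G.Walk x b, ∀ v ∈ p.support, v ∈ insert x A := by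
    intro b hb
    obtain ⟨q, hq⟩ := hA y hy b hb
    refine ⟨.cons hxy q, ?_⟩
    intro v hv
    rw [Walk.support_cons, List.mem_cons] at hv
    rcases hv with rfl | hv
    · exact Set.mem_insert _ _
    · exact Set.mem_insert_of_mem _ (hq v hv)
  rintro a (rfl | ha) b (rfl | hb)
  · exact ⟨.nil, by simp⟩
  · exact toMem b hb
  · obtain ⟨p, hp⟩ := toMem a ha
    exact ⟨p.reverse, fun v hv => hp v (by rwa [Walk.support_reverse, List.mem_reverse] at hv)⟩
  · obtain ⟨p, hp⟩ := hA a ha b hb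
    exact ⟨p, fun v hv => Set.mem_insert_of_mem _ (hp v hv)⟩

/-- Find an edge crossing from `A ∪ B` into its complement when the latter is nonempty. -/
lemma crossingEdge (hc : G.Connected) {T : Set V} {a t : V} (haT : a ∈ T) (htT : t ∉ T) :
    ∃ x y : V, x ∉ T ∧ y ∈ T ∧ G.Adj x y := by
  obtain ⟨W⟩ := hc a t
  obtain ⟨x, q, hx, _, hmeet⟩ := firstMeet W Tᶜ htT
  have hxa : x ≠ a := by rintro rfl; exact hx haT
  obtain ⟨y, hadj, q₂, hq⟩ := Walk.exists_eq_cons_of_ne hxa q.reverse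
  have hy : y ∈ q.support := by
    have : y ∈ q.reverse.support := by rw [hq]; simp
    rwa [Walk.support_reverse, List.mem_reverse] at this
  have hyx : y ≠ x := hadj.ne'
  have hyT : y ∈ T := by
    by_contra hyT
    exact hyx (hmeet y hy hyT)
  exact ⟨x, y, hx, hyT, hadj⟩

lemma growPartition (hc : G.Connected) :
    ∀ (n : ℕ) (A B : Set V), Set.ncard ((A ∪ B)ᶜ) ≤ n →
    ConnOn G A → ConnOn G B → (∀ x ∈ A, x ∉ B) → A.Nonempty → B.Nonempty →
    ∃ A' B' : Set V, A ⊆ A' ∧ B ⊆ B' ∧ ConnOn G A' ∧ ConnOn G B' ∧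
      (∀ x ∈ A', x ∉ B') ∧ ∀ x, x ∈ A' ∨ x ∈ B' := by
  intro n
  induction n with
  | zero =>
    intro A B hn hA hB hAB hAne hBne
    refine ⟨A, B, le_refl _, le_refl _, hA, hB, hAB, ?_⟩
    intro x
    by_contra hx
    push_neg at hx
    have : x ∈ (A ∪ B)ᶜ := by simp [hx.1, hx.2]
    have := Set.ncard_pos (s := (A ∪ B)ᶜ) (Set.toFinite _) |>.mpr ⟨x, this⟩
    omega
  | succ n ih =>
    intro A B hn hA hB hAB hAne hBne
    by_cases hfull : ∀ x, x ∈ A ∨ x ∈ B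
    · exact ⟨A, B, le_refl _, le_refl _, hA, hB, hAB, hfull⟩
    push_neg at hfull
    obtain ⟨t, htA, htB⟩ := hfull
    obtain ⟨a, ha⟩ := id hAne
    obtain ⟨x, y, hxT, hyT, hadj⟩ :=
      crossingEdge hc (T := A ∪ B) (t := t) (Or.inl ha) (by simp [htA, htB])
    have hxA : x ∉ A := fun h => hxT (Or.inl h)
    have hxB : x ∉ B := fun h => hxT (Or.inr h)
    have hcard : ∀ (C D : Set V), x ∈ C → Set.ncard ((C ∪ D)ᶜ) ≤ n →
        True := fun _ _ _ _ => trivial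
    rcases hyT with hyA | hyB
    · have hA' : ConnOn G (insert x A) := connOn_insert hA hyA hadj
      have hsub : ((insert x A ∪ B)ᶜ) ⊆ (A ∪ B)ᶜ \ {x} := by
        intro v hv
        simp only [Set.mem_compl_iff, Set.mem_union, Set.mem_insert_iff, not_or,
          Set.mem_diff, Set.mem_singleton_iff] at hv ⊢
        exact ⟨⟨hv.1.2, hv.2⟩, hv.1.1⟩
      have hlt : Set.ncard ((insert x A ∪ B)ᶜ) ≤ n := by
        have h1 : Set.ncard ((insert x A ∪ B)ᶜ) ≤ Set.ncard ((A ∪ B)ᶜ \ {x}) :=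
          Set.ncard_le_ncard hsub (Set.toFinite _)
        have h2 : Set.ncard ((A ∪ B)ᶜ \ {x}) < Set.ncard ((A ∪ B)ᶜ) :=
          Set.ncard_diff_singleton_lt_of_mem (by simp [hxA, hxB]) (Set.toFinite _)
        omega
      obtain ⟨A', B', hsubA, hsubB, h1, h2, h3, h4⟩ := ih (insert x A) B hlt hA' hB
        (by rintro v (rfl | hv) hvB
            · exact hxB hvB
            · exact hAB v hv hvB)
        ⟨x, Set.mem_insert _ _⟩ hBne
      exact ⟨A', B', le_trans (Set.subset_insert _ _) hsubA, hsubB, h1, h2, h3, h4⟩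
    · have hB' : ConnOn G (insert x B) := connOn_insert hB hyB hadj
      have hsub : ((A ∪ insert x B)ᶜ) ⊆ (A ∪ B)ᶜ \ {x} := by
        intro v hv
        simp only [Set.mem_compl_iff, Set.mem_union, Set.mem_insert_iff, not_or,
          Set.mem_diff, Set.mem_singleton_iff] at hv ⊢
        exact ⟨⟨hv.1, hv.2.2⟩, hv.2.1⟩
      have hlt : Set.ncard ((A ∪ insert x B)ᶜ) ≤ n := by
        have h1 : Set.ncard ((A ∪ insert x B)ᶜ) ≤ Set.ncard ((A ∪ B)ᶜ \ {x}) :=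
          Set.ncard_le_ncard hsub (Set.toFinite _)
        have h2 : Set.ncard ((A ∪ B)ᶜ \ {x}) < Set.ncard ((A ∪ B)ᶜ) :=
          Set.ncard_diff_singleton_lt_of_mem (by simp [hxA, hxB]) (Set.toFinite _)
        omega
      obtain ⟨A', B', hsubA, hsubB, h1, h2, h3, h4⟩ := ih A (insert x B) hlt hA hB'
        (by intro v hv hvB
            rcases hvB with rfl | hvB
            · exact hxA hv
            · exact hAB v hv hvB)
        hAne ⟨x, Set.mem_insert _ _⟩
      exact ⟨A', B', hsubA, le_trans (Set.subset_insert _ _) hsubB, h1, h2, h3, h4⟩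

lemma acyclic_empty : (SimpleGraph.fromEdgeSet (↑(∅ : Finset (Sym2 V)) : Set (Sym2 V))).IsAcyclic := by
  intro v c hc
  cases c with
  | nil => exact hc.ne_nil rfl
  | cons h p => simp only [Finset.coe_empty, SimpleGraph.fromEdgeSet_empty] at h; exact h.elim

lemma acyclic_insert_pendant {F : Finset (Sym2 V)} {t : Set V}
    (hFt : ∀ e ∈ F, ∀ v ∈ e, v ∈ t)
    (hac : (SimpleGraph.fromEdgeSet (↑F : Set (Sym2 V))).IsAcyclic)
    {x y : V} (hx : x ∉ t) (hxy : x ≠ y) :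
    (SimpleGraph.fromEdgeSet (↑(insert s(y,x) F) : Set (Sym2 V))).IsAcyclic := by
  set H' := SimpleGraph.fromEdgeSet (↑(insert s(y,x) F) : Set (Sym2 V)) with hH'
  have hadjx : ∀ b : V, H'.Adj x b → b = y := by
    intro b hb
    rw [hH', SimpleGraph.fromEdgeSet_adj] at hb
    obtain ⟨hmem, hne⟩ := hb
    rw [Finset.coe_insert, Set.mem_insert_iff] at hmem
    rcases hmem with heq | hmem
    · rw [Sym2.eq_iff] at heq
      rcases heq with ⟨rfl, _⟩ | ⟨_, rfl⟩
      · exact absurd rfl hxy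
      · rfl
    · exact absurd (hFt _ hmem x (by simp)) hx
  -- no cycle through x
  have keyx : ∀ (c : H'.Walk x x), c.IsCycle → False := by
    intro c hc
    cases c with
    | nil => exact hc.ne_nil rfl
    | @cons _ b _ h p =>
      have hb : b = y := hadjx b h
      have hxb : x ≠ b := by rw [hb]; exact hxy
      obtain ⟨b₂, h₂, q, hq⟩ := Walk.exists_eq_cons_of_ne hxb p.reverse
      have hbb : b₂ = b := by rw [hadjx b₂ h₂, hb]
      subst hbb
      have hmem : s(x, b₂) ∈ p.edges := by
        have : s(x, b₂) ∈ p.reverse.edges := by rw [hq]; simp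
        rwa [Walk.edges_reverse, List.mem_reverse] at this
      have hnd := hc.edges_nodup
      rw [Walk.edges_cons] at hnd
      exact (List.nodup_cons.mp hnd).1 hmem
  intro v c hc
  by_cases hxc : x ∈ c.support
  · exact keyx (c.rotate x hxc) (Walk.IsCycle.rotate hxc hc)
  · have hce : ∀ e ∈ c.edges, e ∈ (SimpleGraph.fromEdgeSet (↑F : Set (Sym2 V))).edgeSet := by
      intro e he
      have h1 := c.edges_subset_edgeSet he
      rw [hH', SimpleGraph.edgeSet_fromEdgeSet] at h1
      obtain ⟨hmem, hdiag⟩ := h1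
      rw [Finset.coe_insert, Set.mem_insert_iff] at hmem
      rcases hmem with rfl | hmem
      · exact absurd (Walk.snd_mem_support_of_mem_edges c he) hxc
      · rw [SimpleGraph.edgeSet_fromEdgeSet]
        exact ⟨hmem, hdiag⟩
    exact hac (c.transfer _ hce) (hc.transfer hce)

lemma treeOfAux (s : Set V) (hs : ConnOn G s) {r : V} (hr : r ∈ s) :
    ∀ (n : ℕ) (t : Set V) (F : Finset (Sym2 V)), Set.ncard (s \ t) ≤ n → t ⊆ s → r ∈ t →
    ↑F ⊆ G.edgeSet → (∀ e ∈ F, ∀ v ∈ e, v ∈ t) →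
    (SimpleGraph.fromEdgeSet (↑F : Set (Sym2 V))).IsAcyclic →
    (∀ x ∈ t, (SimpleGraph.fromEdgeSet (↑F : Set (Sym2 V))).Reachable x r) →
    ∃ F' : Finset (Sym2 V), ↑F' ⊆ G.edgeSet ∧ (∀ e ∈ F', ∀ v ∈ e, v ∈ s) ∧
      (SimpleGraph.fromEdgeSet (↑F' : Set (Sym2 V))).IsAcyclic ∧
      ∀ x ∈ s, (SimpleGraph.fromEdgeSet (↑F' : Set (Sym2 V))).Reachable x r := by
  intro n
  induction n with
  | zero =>
    intro t F hn hts hrt hFG hFt hac hreach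
    have hst : s ⊆ t := by
      intro x hx
      by_contra hxt
      have : x ∈ s \ t := ⟨hx, hxt⟩
      have := Set.ncard_pos (s := s \ t) (Set.toFinite _) |>.mpr ⟨x, this⟩
      omega
    exact ⟨F, hFG, fun e he v hv => hts (hFt e he v hv), hac, fun x hx => hreach x (hst hx)⟩
  | succ n ih =>
    intro t F hn hts hrt hFG hFt hac hreach
    by_cases hst : ∀ x ∈ s, x ∈ t
    · exact ⟨F, hFG, fun e he v hv => hts (hFt e he v hv), hac, fun x hx => hreach x (hst x hx)⟩
    push_neg at hst
    obtain ⟨u, hu, hut⟩ := hst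
    obtain ⟨W, hW⟩ := hs r hr u hu
    obtain ⟨x, q, hx, hqsub, hmeet⟩ := firstMeet W {y | y ∉ t} hut
    have hxs : x ∈ s := hW x (hqsub x (Walk.end_mem_support _))
    have hxr : x ≠ r := by rintro rfl; exact hx hrt
    obtain ⟨y, hadj, q₂, hq⟩ := Walk.exists_eq_cons_of_ne hxr q.reverse
    have hy : y ∈ q.support := by
      have : y ∈ q.reverse.support := by rw [hq]; simp
      rwa [Walk.support_reverse, List.mem_reverse] at this
    have hyt : y ∈ t := by
      by_contra hyt
      exact hadj.ne' (hmeet y hy hyt)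
    have hxy : x ≠ y := hadj.ne
    set F' := insert s(y, x) F with hF'
    have hsubF : (↑F : Set (Sym2 V)) ⊆ (↑F' : Set (Sym2 V)) := by
      rw [hF', Finset.coe_insert]; exact Set.subset_insert _ _
    have hmono := SimpleGraph.fromEdgeSet_mono hsubF
    refine ih (insert x t) F' ?_ ?_ (Set.mem_insert_of_mem _ hrt) ?_ ?_ ?_ ?_
    · have hsub2 : s \ insert x t ⊆ (s \ t) \ {x} := by
        intro v hv
        simp only [Set.mem_diff, Set.mem_insert_iff, not_or, Set.mem_singleton_iff] at hv ⊢
        exact ⟨⟨hv.1, hv.2.2⟩, hv.2.1⟩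
      have h1 : Set.ncard (s \ insert x t) ≤ Set.ncard ((s \ t) \ {x}) :=
        Set.ncard_le_ncard hsub2 (Set.toFinite _)
      have h2 : Set.ncard ((s \ t) \ {x}) < Set.ncard (s \ t) :=
        Set.ncard_diff_singleton_lt_of_mem ⟨hxs, hx⟩ (Set.toFinite _)
      omega
    · intro v hv
      rcases hv with rfl | hv
      · exact hxs
      · exact hts hv
    · rw [hF', Finset.coe_insert]
      rintro e (rfl | he)
      · exact hadj.symm
      · exact hFG he
    · intro e he v hv
      rw [hF', Finset.mem_insert] at he
      rcases he with rfl | he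
      · simp only [Sym2.mem_iff] at hv
        rcases hv with rfl | rfl
        · exact Set.mem_insert_of_mem _ hyt
        · exact Set.mem_insert _ _
      · exact Set.mem_insert_of_mem _ (hFt e he v hv)
    · exact acyclic_insert_pendant hFt hac hx hxy
    · intro v hv
      rcases hv with rfl | hv
      · have hadj' : (SimpleGraph.fromEdgeSet (↑F' : Set (Sym2 V))).Adj v y := by
          rw [SimpleGraph.fromEdgeSet_adj]
          constructor
          · rw [hF', Finset.coe_insert]
            left
            exact Sym2.eq_swap
          · exact hxy
        exact hadj'.reachable.trans ((hreach y hyt).mono hmono)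
      · exact (hreach v hv).mono hmono

lemma treeOf (s : Set V) (hs : ConnOn G s) {r : V} (hr : r ∈ s) :
    ∃ F : Finset (Sym2 V), ↑F ⊆ G.edgeSet ∧ (∀ e ∈ F, ∀ v ∈ e, v ∈ s) ∧
      (SimpleGraph.fromEdgeSet (↑F : Set (Sym2 V))).IsAcyclic ∧
      ∀ x ∈ s, (SimpleGraph.fromEdgeSet (↑F : Set (Sym2 V))).Reachable x r := by
  refine treeOfAux s hs hr (Set.ncard (s \ {r})) {r} ∅ le_rfl ?_ rfl ?_ ?_ acyclic_empty ?_
  · simpa using hr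
  · simp
  · simp
  · rintro x rfl
    exact SimpleGraph.Reachable.refl _

/-- walks in the union forest starting on one side stay on that side. -/
lemma sideWalk {E E₁ : Finset (Sym2 V)} {A : Set V}
    (hsplit : ∀ e ∈ E, (e ∈ E₁ ∧ ∀ v ∈ e, v ∈ A) ∨ (∀ v ∈ e, v ∉ A)) :
    ∀ {x y : V} (w : (SimpleGraph.fromEdgeSet (↑E : Set (Sym2 V))).Walk x y), x ∈ A →
      y ∈ A ∧ ∀ e ∈ w.edges, e ∈ (SimpleGraph.fromEdgeSet (↑E₁ : Set (Sym2 V))).edgeSet := by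
  intro x y w
  induction w with
  | nil => exact fun hx => ⟨hx, by simp⟩
  | @cons a b c h p ih =>
    intro ha
    rw [SimpleGraph.fromEdgeSet_adj] at h
    obtain ⟨hmem, hne⟩ := h
    have hmem' : s(a, b) ∈ E := hmem
    rcases hsplit _ hmem' with ⟨he1, hin⟩ | hout
    · have hb : b ∈ A := hin b (by simp)
      obtain ⟨hc, hrest⟩ := ih hb
      refine ⟨hc, ?_⟩
      intro e he
      rw [Walk.edges_cons, List.mem_cons] at he
      rcases he with rfl | he
      · rw [SimpleGraph.edgeSet_fromEdgeSet]
        exact ⟨he1, by simp [hne]⟩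
      · exact hrest e he
    · exact absurd ha (hout a (by simp))

lemma assemble (hA : ConnOn G A) (hB : ConnOn G B)
    (hdisj : ∀ x ∈ A, x ∉ B) (hcover : ∀ x, x ∈ A ∨ x ∈ B)
    {p q : V} (hp : p ∈ A) (hq : q ∈ B) (N₁ N₂ : Set V)
    (hN₁ : ∀ x ∈ N₁, x ∈ A) (hN₂ : ∀ x ∈ N₂, x ∈ B) :
    ∃ F, IsTwoTreeForest G N₁ N₂ F := by
  obtain ⟨F₁, hF₁G, hF₁A, hac₁, hreach₁⟩ := treeOf A hA hp
  obtain ⟨F₂, hF₂G, hF₂B, hac₂, hreach₂⟩ := treeOf B hB hq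
  set F := F₁ ∪ F₂ with hF
  have hsplitA : ∀ e ∈ F, (e ∈ F₁ ∧ ∀ v ∈ e, v ∈ A) ∨ (∀ v ∈ e, v ∉ A) := by
    intro e he
    rw [hF, Finset.mem_union] at he
    by_cases he1 : e ∈ F₁
    · exact Or.inl ⟨he1, hF₁A e he1⟩
    · refine Or.inr ?_
      intro v hv hvA
      exact hdisj v hvA (hF₂B e (he.resolve_left he1) v hv)
  have hsplitB : ∀ e ∈ F, (e ∈ F₂ ∧ ∀ v ∈ e, v ∈ B) ∨ (∀ v ∈ e, v ∉ B) := by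
    intro e he
    rw [hF, Finset.mem_union] at he
    by_cases he2 : e ∈ F₂
    · exact Or.inl ⟨he2, hF₂B e he2⟩
    · refine Or.inr ?_
      intro v hv hvB
      exact hdisj v (hF₁A e (he.resolve_right he2) v hv) hvB
  have hmono₁ : SimpleGraph.fromEdgeSet (↑F₁ : Set (Sym2 V)) ≤
      SimpleGraph.fromEdgeSet (↑F : Set (Sym2 V)) := by
    apply SimpleGraph.fromEdgeSet_mono
    rw [hF]; simp [Finset.coe_union]
  have hmono₂ : SimpleGraph.fromEdgeSet (↑F₂ : Set (Sym2 V)) ≤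
      SimpleGraph.fromEdgeSet (↑F : Set (Sym2 V)) := by
    apply SimpleGraph.fromEdgeSet_mono
    rw [hF]; simp [Finset.coe_union]
  refine ⟨F, ?_, ?_, p, q, ?_, ?_, ?_, ?_⟩
  · rw [hF, Finset.coe_union]
    exact Set.union_subset hF₁G hF₂G
  · intro v c hc
    rcases hcover v with hv | hv
    · obtain ⟨_, hedges⟩ := sideWalk hsplitA c hv
      exact hac₁ (c.transfer _ hedges) (hc.transfer hedges)
    · obtain ⟨_, hedges⟩ := sideWalk hsplitB c hv
      exact hac₂ (c.transfer _ hedges) (hc.transfer hedges)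
  · rintro ⟨w⟩
    exact hdisj q (sideWalk hsplitA w hp).1 hq
  · intro x
    rcases hcover x with hx | hx
    · exact Or.inl ((hreach₁ x hx).mono hmono₁)
    · exact Or.inr ((hreach₂ x hx).mono hmono₂)
  · exact fun x hx => (hreach₁ x (hN₁ x hx)).mono hmono₁
  · exact fun x hx => (hreach₂ x (hN₂ x hx)).mono hmono₂

end Aux

/-- If `G` is a 2-connected finite simple graph and `e = (i, j)`,
`ê = (w, z)` are two distinct edges of `G`, then `T({i,w},{j,z}) ∪ T({i,z},{j,w}) ≠ ∅`:
there is a spanning forest of `G` consisting of exactly two vertex-disjoint trees, one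
containing `i` and one endpoint of `ê`, the other containing `j` and the other
endpoint of `ê`. -/
theorem twoForests_nonempty_of_twoConnected (G : SimpleGraph V) (h2 : TwoConnected G)
    (i j w z : V) (hij : G.Adj i j) (hwz : G.Adj w z) (hne : s(i, j) ≠ s(w, z)) :
    (twoForests G {i, w} {j, z} ∪ twoForests G {i, z} {j, w}).Nonempty := by
  obtain ⟨hconn, _hcard, hind⟩ := h2
  have hijne : i ≠ j := hij.ne
  have hwzne : w ≠ z := hwz.ne
  suffices h : (∃ F, IsTwoTreeForest G {i, w} {j, z} F) ∨
      (∃ F, IsTwoTreeForest G {i, z} {j, w} F) by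
    rcases h with ⟨F, hF⟩ | ⟨F, hF⟩
    · refine ⟨F, Finset.mem_union_left _ ?_⟩
      unfold twoForests
      simp only [Finset.mem_filter, Finset.mem_univ, true_and]
      exact hF
    · refine ⟨F, Finset.mem_union_right _ ?_⟩
      unfold twoForests
      simp only [Finset.mem_filter, Finset.mem_univ, true_and]
      exact hF
  have hcover : ∀ u : V, ∀ x : V, x ∈ ({u} : Set V) ∨ x ∈ ({u}ᶜ : Set V) := by
    intro u x
    by_cases h : x = u <;> simp [h]
  have hdisj1 : ∀ u : V, ∀ x ∈ ({u} : Set V), x ∉ ({u}ᶜ : Set V) := by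
    intro u x hx
    simp only [Set.mem_singleton_iff] at hx
    simp [hx]
  have hdisj2 : ∀ u : V, ∀ x ∈ ({u}ᶜ : Set V), x ∉ ({u} : Set V) := by
    intro u x hx
    simpa using hx
  by_cases hiw : i = w
  · -- N₁ = {i, w} = {i}
    refine Or.inl (assemble (connOn_singleton i) (connOn_compl_singleton hind i)
      (hdisj1 i) (hcover i) (p := i) (q := j) rfl (by simp [hijne.symm]) _ _ ?_ ?_)
    · rintro x (rfl | rfl)
      · rfl
      · exact hiw.symm
    · rintro x (rfl | rfl)
      · simp [hijne.symm]
      · simp only [Set.mem_compl_iff, Set.mem_singleton_iff]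
        exact fun h => hwz.ne' (h.trans hiw)
  by_cases hiz : i = z
  · refine Or.inr (assemble (connOn_singleton i) (connOn_compl_singleton hind i)
      (hdisj1 i) (hcover i) (p := i) (q := j) rfl (by simp [hijne.symm]) _ _ ?_ ?_)
    · rintro x (rfl | rfl)
      · rfl
      · exact hiz.symm
    · rintro x (rfl | rfl)
      · simp [hijne.symm]
      · simp only [Set.mem_compl_iff, Set.mem_singleton_iff]
        exact fun h => hwzne (h.trans hiz)
  by_cases hjw : j = w
  · refine Or.inr (assemble (connOn_compl_singleton hind j) (connOn_singleton j)
      (hdisj2 j) (fun x => (hcover j x).symm) (p := i) (q := j) (by simp [hijne]) rfl _ _ ?_ ?_)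
    · rintro x (rfl | rfl)
      · simp [hijne]
      · simp only [Set.mem_compl_iff, Set.mem_singleton_iff]
        exact fun h => hwz.ne' (h.trans hjw)
    · rintro x (rfl | rfl)
      · rfl
      · exact hjw.symm
  by_cases hjz : j = z
  · refine Or.inl (assemble (connOn_compl_singleton hind j) (connOn_singleton j)
      (hdisj2 j) (fun x => (hcover j x).symm) (p := i) (q := j) (by simp [hijne]) rfl _ _ ?_ ?_)
    · rintro x (rfl | rfl)
      · simp [hijne]
      · simp only [Set.mem_compl_iff, Set.mem_singleton_iff]
        exact fun h => hwzne (h.trans hjz)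
    · rintro x (rfl | rfl)
      · rfl
      · exact hjz.symm
  -- all four vertices distinct
  rcases twoLinks hconn hind hijne hiw hiz hjw hjz hwzne with ⟨P, Q, hPQ⟩ | ⟨P, Q, hPQ⟩
  · obtain ⟨A', B', hsubA, hsubB, hA', hB', hdisj', hcover'⟩ :=
      growPartition hconn (Set.ncard (({v | v ∈ P.support} ∪ {v | v ∈ Q.support})ᶜ))
        {v | v ∈ P.support} {v | v ∈ Q.support} le_rfl
        (connOn_support P) (connOn_support Q) hPQ
        ⟨i, P.start_mem_support⟩ ⟨j, Q.start_mem_support⟩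
    refine Or.inl (assemble hA' hB' hdisj' hcover' (p := i) (q := j)
      (hsubA P.start_mem_support) (hsubB Q.start_mem_support) _ _ ?_ ?_)
    · rintro x (rfl | rfl)
      · exact hsubA P.start_mem_support
      · exact hsubA P.end_mem_support
    · rintro x (rfl | rfl)
      · exact hsubB Q.start_mem_support
      · exact hsubB Q.end_mem_support
  · obtain ⟨A', B', hsubA, hsubB, hA', hB', hdisj', hcover'⟩ :=
      growPartition hconn (Set.ncard (({v | v ∈ P.support} ∪ {v | v ∈ Q.support})ᶜ))
        {v | v ∈ P.support} {v | v ∈ Q.support} le_rfl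
        (connOn_support P) (connOn_support Q) hPQ
        ⟨i, P.start_mem_support⟩ ⟨j, Q.start_mem_support⟩
    refine Or.inr (assemble hA' hB' hdisj' hcover' (p := i) (q := j)
      (hsubA P.start_mem_support) (hsubB Q.start_mem_support) _ _ ?_ ?_)
    · rintro x (rfl | rfl)
      · exact hsubA P.start_mem_support
      · exact hsubA P.end_mem_support
    · rintro x (rfl | rfl)
      · exact hsubB Q.start_mem_support
      · exact hsubB Q.end_mem_support
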